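/- The group G_n = ⟨P₀, P₁, J | P₀ⁿ, P₁ⁿ, Jⁿ, [J,P₀], [J,P₁], Jⁱ(P₀ⁱP₁⁻ⁱ)² for 1 ≤ i ≤ ⌊n/2⌋⟩ has order at most n² · 2^{n-1}. -/

import Mathlib

open FreeGroup

/-- Free-group generators: `0 ↦ P₀`, `1 ↦ P₁`, `2 ↦ J`. -/
def chshRels (n : ℕ) : Set (FreeGroup (Fin 3)) :=
  {w | w = (FreeGroup.of 0) ^ n ∨ w = (FreeGroup.of 1) ^ n ∨ w = (FreeGroup.of 2) ^ n ∨
    w = (FreeGroup.of 2) * (FreeGroup.of 0) * (FreeGroup.of 2)⁻¹ * (FreeGroup.of 0)⁻¹ ∨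
    w = (FreeGroup.of 2) * (FreeGroup.of 1) * (FreeGroup.of 2)⁻¹ * (FreeGroup.of 1)⁻¹ ∨
    ∃ i : ℕ, 1 ≤ i ∧ i ≤ n / 2 ∧
      w = (FreeGroup.of 2) ^ i * ((FreeGroup.of 0) ^ i * ((FreeGroup.of 1) ^ i)⁻¹) ^ 2}

/-- The group `G_n` of the generalized CHSH game. -/
def Gn (n : ℕ) : Type := PresentedGroup (chshRels n)

instance (n : ℕ) : Group (Gn n) := by unfold Gn; infer_instance

namespace CHSHAux

abbrev GG (n : ℕ) := PresentedGroup (chshRels n)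

def a (n : ℕ) : GG n := PresentedGroup.of 0
def b (n : ℕ) : GG n := PresentedGroup.of 1
def j (n : ℕ) : GG n := PresentedGroup.of 2

variable {n : ℕ}

lemma rel_one {r : FreeGroup (Fin 3)} (hr : r ∈ chshRels n) :
    PresentedGroup.mk (chshRels n) r = 1 :=
  (QuotientGroup.eq_one_iff r).mpr (Subgroup.subset_normalClosure hr)

lemma ha : a n ^ n = 1 := by
  have h := rel_one (n := n) (r := (FreeGroup.of 0) ^ n) (Or.inl rfl)
  rwa [map_pow] at h

lemma hb : b n ^ n = 1 := by
  have h := rel_one (n := n) (r := (FreeGroup.of 1) ^ n) (Or.inr (Or.inl rfl))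
  rwa [map_pow] at h

lemma hj : j n ^ n = 1 := by
  have h := rel_one (n := n) (r := (FreeGroup.of 2) ^ n) (Or.inr (Or.inr (Or.inl rfl)))
  rwa [map_pow] at h

lemma hja : Commute (j n) (a n) := by
  have h := rel_one (n := n)
    (r := (FreeGroup.of 2) * (FreeGroup.of 0) * (FreeGroup.of 2)⁻¹ * (FreeGroup.of 0)⁻¹)
    (Or.inr (Or.inr (Or.inr (Or.inl rfl))))
  simp only [_root_.map_mul, _root_.map_inv] at h
  exact commutatorElement_eq_one_iff_commute.mp (by rw [commutatorElement_def]; exact h)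

lemma hjb : Commute (j n) (b n) := by
  have h := rel_one (n := n)
    (r := (FreeGroup.of 2) * (FreeGroup.of 1) * (FreeGroup.of 2)⁻¹ * (FreeGroup.of 1)⁻¹)
    (Or.inr (Or.inr (Or.inr (Or.inr (Or.inl rfl)))))
  simp only [_root_.map_mul, _root_.map_inv] at h
  exact commutatorElement_eq_one_iff_commute.mp (by rw [commutatorElement_def]; exact h)

/-- `c k = a^k * b^{-k}`. -/
def c (n k : ℕ) : GG n := a n ^ k * (b n ^ k)⁻¹

lemma hrel {i : ℕ} (h1 : 1 ≤ i) (h2 : i ≤ n / 2) :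
    j n ^ i * (c n i) ^ 2 = 1 := by
  have h := rel_one (n := n)
    (r := (FreeGroup.of 2) ^ i * ((FreeGroup.of 0) ^ i * ((FreeGroup.of 1) ^ i)⁻¹) ^ 2)
    (Or.inr (Or.inr (Or.inr (Or.inr (Or.inr ⟨i, h1, h2, rfl⟩)))))
  simp only [_root_.map_mul, _root_.map_inv, _root_.map_pow] at h
  exact h

/-- every element commutes with `j`. -/
lemma jcentral (x : GG n) : Commute (j n) x := by
  have hx : x ∈ Subgroup.closure (Set.range (PresentedGroup.of : Fin 3 → GG n)) := by
    rw [PresentedGroup.closure_range_of]; trivial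
  refine Subgroup.closure_induction (fun y hy => ?_) (Commute.one_right _)
    (fun y z _ _ hy hz => Commute.mul_right hy hz)
    (fun y _ hy => Commute.inv_right hy) hx
  obtain ⟨i, rfl⟩ := hy
  fin_cases i
  · exact hja
  · exact hjb
  · exact Commute.refl _

lemma c_zero : c n 0 = 1 := by simp [c]

lemma c_period (k : ℕ) : c n (k + n) = c n k := by
  simp [c, pow_add, ha, hb]

lemma c_n : c n n = 1 := by
  simp [c, ha, hb]

/-- free identity : `a * c k * a⁻¹ = c (k+1) * (c 1)⁻¹`. -/
lemma conj_a (k : ℕ) : a n * c n k * (a n)⁻¹ = c n (k + 1) * (c n 1)⁻¹ := by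
  simp only [c, pow_succ, pow_one]
  group

lemma pow_pred_a (hn : 1 ≤ n) : a n ^ (n - 1) = (a n)⁻¹ := by
  refine eq_inv_of_mul_eq_one_left ?_
  rw [← pow_succ]
  have : n - 1 + 1 = n := by omega
  rw [this]; exact ha

lemma pow_pred_b (hn : 1 ≤ n) : b n ^ (n - 1) = (b n)⁻¹ := by
  refine eq_inv_of_mul_eq_one_left ?_
  rw [← pow_succ]
  have : n - 1 + 1 = n := by omega
  rw [this]; exact hb

lemma pow_pred_j (hn : 1 ≤ n) : j n ^ (n - 1) = (j n)⁻¹ := by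
  refine eq_inv_of_mul_eq_one_left ?_
  rw [← pow_succ]
  have : n - 1 + 1 = n := by omega
  rw [this]; exact hj

lemma c_nsub1 (hn : 1 ≤ n) : c n (n - 1) = (a n)⁻¹ * b n := by
  rw [c, pow_pred_a hn, pow_pred_b hn]
  group

lemma conj_ainv (hn : 1 ≤ n) (k : ℕ) :
    (a n)⁻¹ * c n (k + 1) * a n = c n k * (c n (n - 1))⁻¹ := by
  rw [c_nsub1 hn]
  simp only [c, pow_succ, pow_one]
  group

lemma csq_half {i : ℕ} (h1 : 1 ≤ i) (h2 : i ≤ n / 2) :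
    c n i ^ 2 * j n ^ i = 1 := by
  have h := hrel h1 h2
  have : c n i ^ 2 = (j n ^ i)⁻¹ := by
    rw [eq_inv_iff_mul_eq_one]
    calc c n i ^ 2 * j n ^ i = j n ^ i * c n i ^ 2 := by
          exact (((jcentral (c n i)).pow_left i).pow_right 2).symm.eq
      _ = 1 := h
  rw [this, inv_mul_cancel]

lemma csq_upper {i : ℕ} (h1 : 1 ≤ i) (h2 : i ≤ n / 2) :
    c n (n - i) ^ 2 * j n ^ (n - i) = 1 := by
  have hin : i ≤ n := le_trans h2 (Nat.div_le_self n 2)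
  have hai : a n ^ (n - i) = (a n ^ i)⁻¹ := by
    refine eq_inv_of_mul_eq_one_left ?_
    rw [← pow_add]
    have : n - i + i = n := by omega
    rw [this]; exact ha
  have hbi : (b n ^ (n - i))⁻¹ = b n ^ i := by
    have : b n ^ (n - i) = (b n ^ i)⁻¹ := by
      refine eq_inv_of_mul_eq_one_left ?_
      rw [← pow_add]
      have : n - i + i = n := by omega
      rw [this]; exact hb
    rw [this, inv_inv]
  have key : c n (n - i) = (a n ^ i)⁻¹ * (c n i)⁻¹ * a n ^ i := by
    rw [c, hai, hbi, c]
    group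
  have hc2 : (c n i)⁻¹ ^ 2 = j n ^ i := by
    have := csq_half h1 h2
    have h3 : c n i ^ 2 = (j n ^ i)⁻¹ := by
      rw [eq_inv_iff_mul_eq_one]; exact this
    rw [inv_pow, h3, inv_inv]
  have : c n (n - i) ^ 2 = j n ^ i := by
    rw [key]
    have expand : ((a n ^ i)⁻¹ * (c n i)⁻¹ * a n ^ i) ^ 2
        = (a n ^ i)⁻¹ * (c n i)⁻¹ ^ 2 * a n ^ i := by rw [sq, sq]; group
    rw [expand, hc2]
    have comm : j n ^ i * a n ^ i = a n ^ i * j n ^ i :=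
      (((jcentral (a n)).pow_right i).pow_left i).eq
    calc (a n ^ i)⁻¹ * j n ^ i * a n ^ i = (a n ^ i)⁻¹ * (j n ^ i * a n ^ i) := by group
      _ = (a n ^ i)⁻¹ * (a n ^ i * j n ^ i) := by rw [comm]
      _ = j n ^ i := by group
  rw [this, ← pow_add]
  have : i + (n - i) = n := by omega
  rw [this]; exact hj

lemma csq_le_n {k : ℕ} (hk : k ≤ n) : c n k ^ 2 * j n ^ k = 1 := by
  rcases Nat.eq_zero_or_pos k with rfl | hk1
  · simp [c_zero]
  rcases le_or_gt k (n / 2) with h2 | h2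
  · exact csq_half hk1 h2
  rcases eq_or_lt_of_le hk with rfl | hkn
  · rw [c_n, hj]; simp
  · have h1 : 1 ≤ n - k := by omega
    have h2' : n - k ≤ n / 2 := by omega
    have := csq_upper (n := n) h1 h2'
    have heq : n - (n - k) = k := by omega
    rwa [heq] at this

lemma csq (hn : 1 ≤ n) (k : ℕ) : c n k ^ 2 * j n ^ k = 1 := by
  induction k using Nat.strong_induction_on with
  | _ k ih =>
    rcases le_or_gt k n with hk | hk
    · exact csq_le_n hk
    · have hk' : k - n < k := by omega
      have heq : k - n + n = k := by omega
      have := ih (k - n) hk'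
      calc c n k ^ 2 * j n ^ k
          = c n (k - n + n) ^ 2 * j n ^ (k - n + n) := by rw [heq]
        _ = c n (k - n) ^ 2 * (j n ^ (k - n) * j n ^ n) := by rw [c_period, pow_add]
        _ = c n (k - n) ^ 2 * j n ^ (k - n) := by rw [hj, mul_one]
        _ = 1 := this

lemma csq' (hn : 1 ≤ n) (k : ℕ) : c n k ^ 2 = (j n ^ k)⁻¹ :=
  eq_inv_of_mul_eq_one_left (csq hn k)

lemma c1_inv (hn : 1 ≤ n) : (c n 1)⁻¹ = c n 1 * j n := by
  have h : c n 1 * (c n 1 * j n) = 1 := by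
    have := csq hn 1
    rw [sq, pow_one, mul_assoc] at this
    exact this
  exact (inv_eq_of_mul_eq_one_right h)

lemma sandwich {G : Type*} [Group G] (x y z : G) (h : z * y = y * z) :
    (x * z) * (y * z) = x * y * (z * z) := by
  calc (x*z)*(y*z) = x*(z*y)*z := by group
    _ = x*(y*z)*z := by rw [h]
    _ = x*y*(z*z) := by group

lemma comm1 (hn : 1 ≤ n) (m : ℕ) : Commute (c n 1) (c n m) := by
  cases m with
  | zero => rw [c_zero]; exact Commute.one_right _
  | succ k =>
    set X := c n (k+1) * (c n 1)⁻¹ with hX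
    have h1' : X * X = (j n ^ k)⁻¹ := by
      have h1 : X ^ 2 = (j n ^ k)⁻¹ := by
        rw [hX, ← conj_a]
        calc (a n * c n k * (a n)⁻¹) ^ 2 = a n * c n k ^ 2 * (a n)⁻¹ := by rw [sq, sq]; group
          _ = a n * (j n ^ k)⁻¹ * (a n)⁻¹ := by rw [csq' hn k]
          _ = a n * ((a n)⁻¹ * (j n ^ k)⁻¹) := by
              rw [mul_assoc, (((jcentral (a n)).pow_left k).inv_left.inv_right).eq]
          _ = (j n ^ k)⁻¹ := by group
      rwa [sq] at h1
    have hXc : c n (k+1) = X * c n 1 := by rw [hX]; group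
    have e1 : X * c n (k+1) = (j n ^ k)⁻¹ * c n 1 := by
      rw [hXc, ← mul_assoc, h1']
    have e2 : c n (k+1) * X = (j n ^ k)⁻¹ * c n 1 := by
      calc c n (k+1) * X = c n (k+1) ^ 2 * (c n 1)⁻¹ := by rw [hX, sq]; group
        _ = (j n ^ (k+1))⁻¹ * (c n 1 * j n) := by rw [csq' hn, c1_inv hn]
        _ = (j n ^ (k+1))⁻¹ * (j n * c n 1) := by rw [(jcentral (c n 1)).eq]
        _ = ((j n ^ (k+1))⁻¹ * j n) * c n 1 := by group
        _ = (j n ^ k)⁻¹ * c n 1 := by rw [pow_succ]; group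
    have hcom : X * c n (k+1) = c n (k+1) * X := e1.trans e2.symm
    have : c n (k+1) * ((c n 1)⁻¹ * c n (k+1)) = c n (k+1) * (c n (k+1) * (c n 1)⁻¹) := by
      calc c n (k+1) * ((c n 1)⁻¹ * c n (k+1)) = X * c n (k+1) := by rw [hX]; group
        _ = c n (k+1) * X := hcom
        _ = c n (k+1) * (c n (k+1) * (c n 1)⁻¹) := by rw [hX]
    have h2 : (c n 1)⁻¹ * c n (k+1) = c n (k+1) * (c n 1)⁻¹ := mul_left_cancel this
    exact Commute.inv_left_iff.mp h2

lemma comm_shift (hn : 1 ≤ n) {i m : ℕ} (h : Commute (c n i) (c n m)) :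
    Commute (c n (i+1)) (c n (m+1)) := by
  have swap : (c n 1)⁻¹ * c n (m+1) = c n (m+1) * (c n 1)⁻¹ := ((comm1 hn (m+1)).inv_left).eq
  have swap2 : (c n 1)⁻¹ * c n (i+1) = c n (i+1) * (c n 1)⁻¹ := ((comm1 hn (i+1)).inv_left).eq
  have e : (c n (i+1) * (c n 1)⁻¹) * (c n (m+1) * (c n 1)⁻¹)
      = (c n (m+1) * (c n 1)⁻¹) * (c n (i+1) * (c n 1)⁻¹) := by
    rw [← conj_a, ← conj_a]
    calc (a n * c n i * (a n)⁻¹) * (a n * c n m * (a n)⁻¹)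
        = a n * (c n i * c n m) * (a n)⁻¹ := by group
      _ = a n * (c n m * c n i) * (a n)⁻¹ := by rw [h.eq]
      _ = (a n * c n m * (a n)⁻¹) * (a n * c n i * (a n)⁻¹) := by group
  have e2 : c n (i+1) * c n (m+1) * ((c n 1)⁻¹ * (c n 1)⁻¹)
      = c n (m+1) * c n (i+1) * ((c n 1)⁻¹ * (c n 1)⁻¹) := by
    rw [← sandwich _ _ _ swap, ← sandwich _ _ _ swap2, e]
  exact mul_right_cancel e2

lemma commc (hn : 1 ≤ n) (i m : ℕ) : Commute (c n i) (c n m) := by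
  have aux : ∀ d i, Commute (c n i) (c n (i + d)) := by
    intro d i
    induction i with
    | zero => rw [c_zero]; exact Commute.one_left _
    | succ k ih =>
      have := comm_shift hn ih
      have heq : k + d + 1 = k + 1 + d := by omega
      rwa [heq] at this
  rcases le_total i m with him | hmi
  · have : i + (m - i) = m := by omega
    rw [← this]; exact aux _ _
  · have : m + (i - m) = i := by omega
    rw [← this]; exact (aux _ _).symm


/-- products of `c (k)`'s selected by a boolean function, for `k = 1..m`. -/
def V (n : ℕ) : ℕ → (ℕ → Bool) → GG n
  | 0, _ => 1
  | (m+1), q => V n m q * (if q (m+1) then c n (m+1) else 1)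

@[simp] lemma V_zero (q : ℕ → Bool) : V n 0 q = 1 := rfl

lemma V_succ (m : ℕ) (q : ℕ → Bool) :
    V n (m+1) q = V n m q * (if q (m+1) then c n (m+1) else 1) := rfl

/-- update a boolean function at one point -/
def upd (s : ℕ → Bool) (x : ℕ) (v : Bool) : ℕ → Bool := fun i => if i = x then v else s i

lemma Vcongr {m : ℕ} {q r : ℕ → Bool} (h : ∀ i, 1 ≤ i → i ≤ m → q i = r i) :
    V n m q = V n m r := by
  induction m with
  | zero => rfl
  | succ k ih =>
    rw [V_succ, V_succ, ih (fun i h1 h2 => h i h1 (by omega)), h (k+1) (by omega) (by omega)]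

lemma Vupd_high {m x : ℕ} (hx : m < x) (s : ℕ → Bool) (v : Bool) :
    V n m (upd s x v) = V n m s :=
  Vcongr (fun i _ h2 => if_neg (by omega))

lemma V_succ_upd (m : ℕ) (s : ℕ → Bool) (v : Bool) :
    V n (m+1) (upd s (m+1) v) = V n m s * (if v then c n (m+1) else 1) := by
  rw [V_succ, Vupd_high (by omega), upd, if_pos rfl]

lemma cV (hn : 1 ≤ n) (k m : ℕ) (q : ℕ → Bool) : Commute (c n k) (V n m q) := by
  induction m with
  | zero => exact Commute.one_right _
  | succ i ih =>
    rw [V_succ]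
    refine ih.mul_right ?_
    rcases q (i+1) with _ | _
    · simp only [Bool.false_eq_true, if_false]; exact Commute.one_right _
    · simp only [if_true]; exact commc hn _ _

lemma jinv_pow (hn : 1 ≤ n) (m : ℕ) : ∃ E, (j n ^ m)⁻¹ = j n ^ E := by
  refine ⟨n * (m+1) - m, ?_⟩
  apply inv_eq_of_mul_eq_one_right
  rw [← pow_add]
  have hle : m ≤ n * (m+1) := by nlinarith
  have : m + (n * (m+1) - m) = n * (m + 1) := by omega
  rw [this, pow_mul, hj, one_pow]

lemma csqE (hn : 1 ≤ n) (k : ℕ) : ∃ E, c n k ^ 2 = j n ^ E := by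
  obtain ⟨E, hE⟩ := jinv_pow hn k
  exact ⟨E, by rw [csq' hn, hE]⟩

lemma cinvE (hn : 1 ≤ n) (k : ℕ) : ∃ E, (c n k)⁻¹ = j n ^ E * c n k := by
  obtain ⟨E, hE⟩ := csqE hn k
  obtain ⟨F, hF⟩ := jinv_pow hn E
  refine ⟨F, ?_⟩
  have h1 : (c n k)⁻¹ = (c n k ^ 2)⁻¹ * c n k := by group
  rw [h1, hE, hF]


lemma jpow_comm (hn : 1 ≤ n) (E : ℕ) (x : GG n) : j n ^ E * x = x * j n ^ E :=
  ((jcentral x).pow_left E).eq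

lemma Vmulc (hn : 1 ≤ n) : ∀ m k, k ≤ m → ∀ q, ∃ E s, V n m q * c n k = j n ^ E * V n m s := by
  intro m
  induction m with
  | zero =>
    intro k hk q
    interval_cases k
    exact ⟨0, q, by simp [c_zero]⟩
  | succ m ih =>
    intro k hk q
    rcases Nat.eq_zero_or_pos k with rfl | hk0
    · exact ⟨0, q, by simp [c_zero]⟩
    by_cases hkm : k = m + 1
    · subst hkm
      cases hq : q (m+1)
      · refine ⟨0, upd q (m+1) true, ?_⟩
        rw [V_succ, hq, V_succ_upd, pow_zero, one_mul]
        simp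
      · obtain ⟨E, hE⟩ := csqE hn (m+1)
        refine ⟨E, upd q (m+1) false, ?_⟩
        rw [V_succ, hq, V_succ_upd]
        simp only [if_true, Bool.false_eq_true, if_false, mul_one]
        rw [mul_assoc, ← sq, hE, ← jpow_comm hn]
    · have hkm' : k ≤ m := by omega
      obtain ⟨E, s, hEs⟩ := ih k hkm' q
      refine ⟨E, upd s (m+1) (q (m+1)), ?_⟩
      have hQc : (if q (m+1) then c n (m+1) else 1) * c n k
          = c n k * (if q (m+1) then c n (m+1) else 1) := by
        cases q (m+1)
        · simp
        · simp only [if_true]; exact ((commc hn (m+1) k)).eq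
      rw [V_succ, V_succ_upd]
      calc V n m q * (if q (m+1) then c n (m+1) else 1) * c n k
          = V n m q * ((if q (m+1) then c n (m+1) else 1) * c n k) := by rw [mul_assoc]
        _ = V n m q * (c n k * (if q (m+1) then c n (m+1) else 1)) := by rw [hQc]
        _ = (V n m q * c n k) * (if q (m+1) then c n (m+1) else 1) := by rw [mul_assoc]
        _ = j n ^ E * V n m s * (if q (m+1) then c n (m+1) else 1) := by rw [hEs]
        _ = j n ^ E * (V n m s * (if q (m+1) then c n (m+1) else 1)) := by rw [mul_assoc]

lemma Vmulcpow (hn : 1 ≤ n) (m k : ℕ) (hk : k ≤ m) (t : ℕ) (q : ℕ → Bool) :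
    ∃ E s, V n m q * c n k ^ t = j n ^ E * V n m s := by
  induction t with
  | zero => exact ⟨0, q, by simp⟩
  | succ t ih =>
    obtain ⟨E, s, hEs⟩ := ih
    obtain ⟨F, s', hF⟩ := Vmulc hn m k hk s
    refine ⟨E + F, s', ?_⟩
    calc V n m q * c n k ^ (t+1) = (V n m q * c n k ^ t) * c n k := by rw [pow_succ, mul_assoc]
      _ = j n ^ E * V n m s * c n k := by rw [hEs]
      _ = j n ^ E * (V n m s * c n k) := by rw [mul_assoc]
      _ = j n ^ E * (j n ^ F * V n m s') := by rw [hF]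
      _ = j n ^ (E + F) * V n m s' := by rw [pow_add]; group

lemma VmulV (hn : 1 ≤ n) (m : ℕ) (q r : ℕ → Bool) :
    ∃ E s, V n m q * V n m r = j n ^ E * V n m s := by
  induction m with
  | zero => exact ⟨0, q, by simp⟩
  | succ m ih =>
    obtain ⟨E, s, hEs⟩ := ih
    have hQR : V n (m+1) q * V n (m+1) r
        = j n ^ E * (V n m s * ((if q (m+1) then c n (m+1) else 1) * (if r (m+1) then c n (m+1) else 1))) := by
      have hswap : (if q (m+1) then c n (m+1) else 1) * V n m r
          = V n m r * (if q (m+1) then c n (m+1) else 1) := by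
        cases q (m+1)
        · simp
        · simp only [if_true]; exact (cV hn (m+1) m r).eq
      calc V n (m+1) q * V n (m+1) r
          = V n m q * ((if q (m+1) then c n (m+1) else 1) * V n m r) * (if r (m+1) then c n (m+1) else 1) := by
            rw [V_succ, V_succ]; group
        _ = V n m q * (V n m r * (if q (m+1) then c n (m+1) else 1)) * (if r (m+1) then c n (m+1) else 1) := by
            rw [hswap]
        _ = (V n m q * V n m r) * ((if q (m+1) then c n (m+1) else 1) * (if r (m+1) then c n (m+1) else 1)) := by
            group
        _ = j n ^ E * V n m s * ((if q (m+1) then c n (m+1) else 1) * (if r (m+1) then c n (m+1) else 1)) := by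
            rw [hEs]
        _ = _ := by rw [mul_assoc]
    cases hq : q (m+1) <;> cases hr : r (m+1) <;> rw [hq, hr] at hQR
    · exact ⟨E, upd s (m+1) false, by rw [hQR, V_succ_upd]; simp⟩
    · exact ⟨E, upd s (m+1) true, by rw [hQR, V_succ_upd]; simp⟩
    · exact ⟨E, upd s (m+1) true, by rw [hQR, V_succ_upd]; simp⟩
    · obtain ⟨F, hF⟩ := csqE hn (m+1)
      refine ⟨E + F, upd s (m+1) false, ?_⟩
      rw [hQR, V_succ_upd]
      simp only [if_true, Bool.false_eq_true, if_false, mul_one]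
      rw [← sq, hF, ← jpow_comm hn F, ← mul_assoc, ← pow_add]

lemma Vinv (hn : 1 ≤ n) (m : ℕ) (q : ℕ → Bool) :
    ∃ E s, (V n m q)⁻¹ = j n ^ E * V n m s := by
  induction m with
  | zero => exact ⟨0, q, by simp⟩
  | succ m ih =>
    obtain ⟨E, s, hEs⟩ := ih
    cases hq : q (m+1)
    · refine ⟨E, upd s (m+1) false, ?_⟩
      rw [V_succ, hq, V_succ_upd]
      simp only [Bool.false_eq_true, if_false, mul_one]
      exact hEs
    · obtain ⟨F, hF⟩ := cinvE hn (m+1)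
      refine ⟨F + E, upd s (m+1) true, ?_⟩
      rw [V_succ, hq, V_succ_upd]
      simp only [if_true]
      calc (V n m q * c n (m+1))⁻¹ = (c n (m+1))⁻¹ * (V n m q)⁻¹ := by group
        _ = (j n ^ F * c n (m+1)) * (j n ^ E * V n m s) := by rw [hF, hEs]
        _ = j n ^ F * (c n (m+1) * j n ^ E) * V n m s := by group
        _ = j n ^ F * (j n ^ E * c n (m+1)) * V n m s := by rw [← jpow_comm hn]
        _ = j n ^ (F + E) * (c n (m+1) * V n m s) := by rw [pow_add]; group
        _ = j n ^ (F + E) * (V n m s * c n (m+1)) := by rw [(cV hn (m+1) m s).eq]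


lemma Vfalse (m : ℕ) {q : ℕ → Bool} (hq : ∀ i, 1 ≤ i → i ≤ m → q i = false) :
    V n m q = 1 := by
  induction m with
  | zero => rfl
  | succ k ih =>
    rw [V_succ, hq (k+1) (by omega) (by omega), ih (fun i h1 h2 => hq i h1 (by omega))]
    simp

lemma conjV (hn : 1 ≤ n) (m : ℕ) (q : ℕ → Bool) :
    ∃ E s t, (a n)⁻¹ * V n m q * a n = j n ^ E * V n m s * c n (n-1) ^ t := by
  induction m with
  | zero => exact ⟨0, q, 0, by simp⟩
  | succ m ih =>
    obtain ⟨E, s, t, hEst⟩ := ih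
    have hsplit : (a n)⁻¹ * V n (m+1) q * a n
        = ((a n)⁻¹ * V n m q * a n) * ((a n)⁻¹ * (if q (m+1) then c n (m+1) else 1) * a n) := by
      rw [V_succ]; group
    cases hq : q (m+1)
    · refine ⟨E, upd s (m+1) false, t, ?_⟩
      rw [hsplit, hq, hEst, V_succ_upd]
      simp
    · have hconj := conj_ainv hn (n := n) m
      obtain ⟨F, s', hF⟩ := Vmulc hn m m le_rfl s
      have key : (a n)⁻¹ * V n (m+1) q * a n
          = j n ^ E * ((V n m s * c n m) * (c n (n-1) ^ t * (c n (n-1))⁻¹)) := by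
        rw [hsplit, hq, hEst]
        simp only [if_true]
        rw [hconj]
        have hsw : c n (n-1) ^ t * c n m = c n m * c n (n-1) ^ t :=
          ((commc hn m (n-1)).pow_right t).symm.eq
        calc j n ^ E * V n m s * c n (n-1) ^ t * (c n m * (c n (n-1))⁻¹)
            = j n ^ E * (V n m s * (c n (n-1) ^ t * c n m) * (c n (n-1))⁻¹) := by group
          _ = j n ^ E * (V n m s * (c n m * c n (n-1) ^ t) * (c n (n-1))⁻¹) := by rw [hsw]
          _ = _ := by group
      rcases t with _ | t'
      · obtain ⟨G, hG⟩ := cinvE hn (n-1)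
        refine ⟨E + F + G, upd s' (m+1) false, 1, ?_⟩
        rw [key, hF]
        rw [V_succ_upd]
        simp only [Bool.false_eq_true, if_false, mul_one, pow_zero, one_mul, pow_one]
        rw [hG]
        calc j n ^ E * (j n ^ F * V n m s' * (j n ^ G * c n (n-1)))
            = j n ^ E * j n ^ F * (V n m s' * j n ^ G) * c n (n-1) := by group
          _ = j n ^ E * j n ^ F * (j n ^ G * V n m s') * c n (n-1) := by
              rw [jpow_comm hn G (V n m s')]
          _ = j n ^ (E + F + G) * V n m s' * c n (n-1) := by rw [pow_add, pow_add]; group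
      · refine ⟨E + F, upd s' (m+1) false, t', ?_⟩
        rw [key, hF]
        rw [V_succ_upd]
        simp only [Bool.false_eq_true, if_false, mul_one]
        have hct : c n (n-1) ^ (t'+1) * (c n (n-1))⁻¹ = c n (n-1) ^ t' := by
          rw [pow_succ]; group
        rw [hct]
        rw [pow_add]; group

/-- normal form predicate -/
def NF (g : GG n) : Prop :=
  ∃ (E P : ℕ) (q : ℕ → Bool), g = j n ^ E * a n ^ P * V n (n-1) q

lemma NF_one (hn : 1 ≤ n) : NF (1 : GG n) :=
  ⟨0, 0, fun _ => false, by rw [Vfalse (n-1) (fun _ _ _ => rfl)]; simp⟩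

lemma NF_mul_j (hn : 1 ≤ n) {g : GG n} (h : NF g) : NF (g * j n) := by
  obtain ⟨E, P, q, rfl⟩ := h
  refine ⟨E + 1, P, q, ?_⟩
  calc j n ^ E * a n ^ P * V n (n-1) q * j n
      = j n ^ E * (a n ^ P * V n (n-1) q * j n) := by group
    _ = j n ^ E * (j n * (a n ^ P * V n (n-1) q)) := by rw [(jcentral _).eq]
    _ = j n ^ (E+1) * a n ^ P * V n (n-1) q := by rw [pow_succ]; group

lemma NF_mul_a (hn : 1 ≤ n) {g : GG n} (h : NF g) : NF (g * a n) := by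
  obtain ⟨E, P, q, rfl⟩ := h
  obtain ⟨F, s, t, hF⟩ := conjV hn (n-1) q
  obtain ⟨G, s', hG⟩ := Vmulcpow hn (n-1) (n-1) le_rfl t s
  refine ⟨E + (F + G), P + 1, s', ?_⟩
  calc j n ^ E * a n ^ P * V n (n-1) q * a n
      = j n ^ E * a n ^ (P+1) * ((a n)⁻¹ * V n (n-1) q * a n) := by rw [pow_succ]; group
    _ = j n ^ E * a n ^ (P+1) * (j n ^ F * V n (n-1) s * c n (n-1) ^ t) := by rw [hF]
    _ = j n ^ E * a n ^ (P+1) * (j n ^ F * (V n (n-1) s * c n (n-1) ^ t)) := by group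
    _ = j n ^ E * a n ^ (P+1) * (j n ^ F * (j n ^ G * V n (n-1) s')) := by rw [hG]
    _ = j n ^ E * (a n ^ (P+1) * j n ^ (F+G)) * V n (n-1) s' := by rw [pow_add]; group
    _ = j n ^ E * (j n ^ (F+G) * a n ^ (P+1)) * V n (n-1) s' := by
        rw [jpow_comm hn (F+G) (a n ^ (P+1))]
    _ = j n ^ (E + (F+G)) * a n ^ (P+1) * V n (n-1) s' := by rw [pow_add (j n) E]; group

lemma NF_mul_b (hn : 1 ≤ n) {g : GG n} (h : NF g) : NF (g * b n) := by
  have hb' : b n = a n * c n (n-1) := by rw [c_nsub1 hn]; group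
  obtain ⟨E, P, q, hg⟩ := NF_mul_a hn h
  obtain ⟨F, s, hF⟩ := Vmulc hn (n-1) (n-1) le_rfl q
  refine ⟨E + F, P, s, ?_⟩
  calc g * b n = (g * a n) * c n (n-1) := by rw [hb']; group
    _ = j n ^ E * a n ^ P * (V n (n-1) q * c n (n-1)) := by rw [hg]; group
    _ = j n ^ E * a n ^ P * (j n ^ F * V n (n-1) s) := by rw [hF]
    _ = j n ^ E * (a n ^ P * j n ^ F) * V n (n-1) s := by group
    _ = j n ^ E * (j n ^ F * a n ^ P) * V n (n-1) s := by
        rw [jpow_comm hn F (a n ^ P)]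
    _ = j n ^ (E + F) * a n ^ P * V n (n-1) s := by rw [pow_add]; group

lemma NF_mul_gen (hn : 1 ≤ n) {g : GG n} (h : NF g) (i : Fin 3) :
    NF (g * PresentedGroup.of i) := by
  fin_cases i
  · exact NF_mul_a hn h
  · exact NF_mul_b hn h
  · exact NF_mul_j hn h

lemma NF_mul_gen_pow (hn : 1 ≤ n) {g : GG n} (h : NF g) (i : Fin 3) (t : ℕ) :
    NF (g * (PresentedGroup.of i) ^ t) := by
  induction t with
  | zero => simpa using h
  | succ t ih =>
    have := NF_mul_gen hn ih i
    rwa [pow_succ, ← mul_assoc]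

lemma gen_pow_n (i : Fin 3) : (PresentedGroup.of i : GG n) ^ n = 1 := by
  fin_cases i
  · exact ha
  · exact hb
  · exact hj

lemma NF_all (hn : 1 ≤ n) (g : GG n) : NF g := by
  have hg : g ∈ Subgroup.closure (Set.range (PresentedGroup.of : Fin 3 → GG n)) := by
    rw [PresentedGroup.closure_range_of]; trivial
  refine Subgroup.closure_induction_right (NF_one hn) ?_ ?_ hg
  · rintro x _ y ⟨i, rfl⟩ hx
    exact NF_mul_gen hn hx i
  · rintro x _ y ⟨i, rfl⟩ hx
    have hinv : (PresentedGroup.of i : GG n)⁻¹ = (PresentedGroup.of i : GG n) ^ (n - 1) := by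
      symm
      refine eq_inv_of_mul_eq_one_left ?_
      rw [← pow_succ]
      have : n - 1 + 1 = n := by omega
      rw [this]; exact gen_pow_n i
    rw [hinv]
    exact NF_mul_gen_pow hn hx i (n-1)

lemma pow_mod_n {x : GG n} (hx : x ^ n = 1) (m : ℕ) : x ^ (m % n) = x ^ m := by
  conv_rhs => rw [← Nat.div_add_mod m n]
  rw [pow_add, pow_mul, hx, one_pow, one_mul]

/-- extension of a boolean tuple to `ℕ → Bool` -/
def extq (n : ℕ) (qf : Fin (n-1) → Bool) : ℕ → Bool := fun i =>
  if h : 1 ≤ i ∧ i ≤ n - 1 then qf ⟨i - 1, by omega⟩ else false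

lemma card_le (hn : 2 ≤ n) : Nat.card (GG n) ≤ n ^ 2 * 2 ^ (n - 1) := by
  classical
  have hn1 : 1 ≤ n := by omega
  have hn0 : 0 < n := by omega
  let f : Fin n × Fin n × (Fin (n-1) → Bool) → GG n := fun x =>
    j n ^ (x.1 : ℕ) * a n ^ (x.2.1 : ℕ) * V n (n-1) (extq n x.2.2)
  have hsurj : Function.Surjective f := by
    intro g
    obtain ⟨E, P, q, rfl⟩ := NF_all hn1 g
    refine ⟨(⟨E % n, Nat.mod_lt _ hn0⟩, ⟨P % n, Nat.mod_lt _ hn0⟩,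
      fun i => q ((i : ℕ) + 1)), ?_⟩
    have hV : V n (n-1) (extq n (fun i : Fin (n-1) => q ((i : ℕ) + 1))) = V n (n-1) q := by
      refine Vcongr (fun i h1 h2 => ?_)
      have hdef : extq n (fun i : Fin (n-1) => q ((i : ℕ) + 1)) i
          = q ((⟨i - 1, by omega⟩ : Fin (n-1)) + 1 : ℕ) := by
        show (if h : 1 ≤ i ∧ i ≤ n - 1 then _ else false) = _
        rw [dif_pos ⟨h1, h2⟩]
      rw [hdef]
      exact congrArg q (by show i - 1 + 1 = i; omega)
    show j n ^ (E % n) * a n ^ (P % n) * V n (n-1) _ = _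
    rw [pow_mod_n hj, pow_mod_n ha, hV]
  have hcard := Nat.card_le_card_of_surjective f hsurj
  calc Nat.card (GG n) ≤ Nat.card (Fin n × Fin n × (Fin (n-1) → Bool)) := hcard
    _ = n * (n * 2 ^ (n-1)) := by
        simp [Nat.card_eq_fintype_card]
    _ = n ^ 2 * 2 ^ (n-1) := by ring

end CHSHAux

theorem stmt_7 (n : ℕ) (hn : 2 ≤ n) :
    Nat.card (Gn n) ≤ n ^ 2 * 2 ^ (n - 1) :=
  CHSHAux.card_le hn
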